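/- Define the recursion S(n) = 2·√(n/L)·S(√(nL)) + c·n·√(log n) for n > L² (with L = log N and c > 0 a constant), and S(n) ≤ c'·n·log n for n ≤ L². Then, unrolling, after r levels the subproblem size is n_r = N^{1/2^r}·L^{1−1/2^r}, and for the first r with 2^r ≥ log N / log log N one has S(N) = O(N log N). -/

import Mathlib

set_option maxHeartbeats 1000000


/-- Unrolling the space recursion `S(n) = 2·√(n/L)·S(√(nL)) + c·n·√(log n)` (for
`n > L²`, where `L = log₂ N`) with base case `S(n) ≤ c'·n·log n` for `n ≤ L²`:
after `r` levels the subproblem size is `N^(1/2^r)·L^(1−1/2^r)`, and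
`S(N) = O(N log N)`. -/
theorem space_recursion_bound (c c' : ℝ) (hc : 0 < c) (hc' : 0 < c') :
    ∃ C : ℝ, 0 < C ∧ ∃ N₀ : ℕ, ∀ N : ℕ, N₀ ≤ N →
      (∀ r : ℕ,
        (fun x : ℝ => Real.sqrt (x * Real.logb 2 N))^[r] N =
          (N : ℝ) ^ ((1 : ℝ) / 2 ^ r) *
            (Real.logb 2 N) ^ (1 - (1 : ℝ) / 2 ^ r)) ∧
      ∀ S : ℝ → ℝ,
        (∀ x : ℝ, 1 ≤ x → x ≤ (Real.logb 2 N) ^ 2 → S x ≤ c' * x * Real.logb 2 x) →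
        (∀ x : ℝ, (Real.logb 2 N) ^ 2 < x →
          S x = 2 * Real.sqrt (x / Real.logb 2 N) * S (Real.sqrt (x * Real.logb 2 N)) +
            c * x * Real.sqrt (Real.logb 2 x)) →
        S N ≤ C * N * Real.logb 2 N := by
  refine ⟨4*c' + 9*c, by positivity, 16, ?_⟩
  intro N hN
  have hN16 : (16:ℝ) ≤ (N:ℝ) := by exact_mod_cast hN
  have hNpos : (0:ℝ) < N := by linarith
  set t := Real.logb 2 (N:ℝ) with ht_def
  have ht4 : (4:ℝ) ≤ t := by
    rw [ht_def, Real.le_logb_iff_rpow_le (by norm_num) hNpos]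
    rw [show ((4:ℝ) = ((4:ℕ):ℝ)) by norm_num, Real.rpow_natCast]
    norm_num; linarith
  have htpos : (0:ℝ) < t := by linarith
  have ht_le_N : t ≤ N := by
    rw [ht_def, Real.logb_le_iff_le_rpow (by norm_num) hNpos]
    calc (N:ℝ) ≤ ((2^N : ℕ):ℝ) := by exact_mod_cast (Nat.lt_two_pow_self (n := N)).le
    _ = (2:ℝ) ^ (N:ℝ) := by push_cast [← Real.rpow_natCast]; ring
  set s := Real.logb 2 t with hs_def
  have hs2 : (2:ℝ) ≤ s := by
    rw [hs_def, Real.le_logb_iff_rpow_le (by norm_num) htpos]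
    rw [show ((2:ℝ) = ((2:ℕ):ℝ)) by norm_num, Real.rpow_natCast]
    norm_num; linarith
  have hspos : (0:ℝ) < s := by linarith
  have hs_le_t : s ≤ t :=
    Real.logb_le_logb_of_le (by norm_num) htpos ht_le_N
  set n : ℕ → ℝ := fun r => (N:ℝ) ^ ((1:ℝ)/2^r) * t ^ (1 - (1:ℝ)/2^r) with hn_def
  have hn_pos : ∀ r, 0 < n r := by
    intro r
    exact mul_pos (Real.rpow_pos_of_pos hNpos _) (Real.rpow_pos_of_pos htpos _)
  have hn0 : n 0 = N := by
    simp only [hn_def, pow_zero, div_one, Real.rpow_one, sub_self, Real.rpow_zero, mul_one]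
  have hstep : ∀ r, Real.sqrt (n r * t) = n (r+1) := by
    intro r
    have h1 : n r * t = (N:ℝ) ^ ((1:ℝ)/2^r) * t ^ (2 - (1:ℝ)/2^r) := by
      rw [hn_def]
      have : t ^ (2 - (1:ℝ)/2^r) = t ^ (1 - (1:ℝ)/2^r) * t ^ (1:ℝ) := by
        rw [← Real.rpow_add htpos]; ring_nf
      rw [this, Real.rpow_one]; ring
    rw [h1, Real.sqrt_eq_rpow,
      Real.mul_rpow (Real.rpow_nonneg hNpos.le _) (Real.rpow_nonneg htpos.le _),
      ← Real.rpow_mul hNpos.le, ← Real.rpow_mul htpos.le, hn_def]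
    have e1 : (1/2^r:ℝ)*(1/2) = 1/2^(r+1) := by rw [pow_succ]; ring
    have e2 : ((2:ℝ)-1/2^r)*(1/2) = 1-1/2^(r+1) := by rw [pow_succ]; ring
    rw [e1, e2]
  have hiter : ∀ r : ℕ, (fun x : ℝ => Real.sqrt (x * t))^[r] (N:ℝ) = n r := by
    intro r
    induction r with
    | zero => simpa using hn0.symm
    | succ r ih => rw [Function.iterate_succ_apply', ih]; exact hstep r
  have hlog : ∀ r, Real.logb 2 (n r) = (1/2^r) * t + (1 - 1/2^r) * s := by
    intro r
    rw [hn_def]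
    rw [Real.logb_mul (Real.rpow_pos_of_pos hNpos _).ne' (Real.rpow_pos_of_pos htpos _).ne',
      Real.logb_rpow_eq_mul_logb_of_pos hNpos, Real.logb_rpow_eq_mul_logb_of_pos htpos,
      ← ht_def, ← hs_def]
  have hn_ge' : ∀ r, t ≤ n r := by
    intro r
    have h1 : t ^ ((1:ℝ)/2^r) ≤ (N:ℝ) ^ ((1:ℝ)/2^r) :=
      Real.rpow_le_rpow htpos.le ht_le_N (by positivity)
    calc t = t ^ ((1:ℝ)/2^r) * t ^ (1 - (1:ℝ)/2^r) := by
            rw [← Real.rpow_add htpos]; norm_num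
      _ ≤ n r := by
            rw [hn_def]
            exact mul_le_mul_of_nonneg_right h1 (Real.rpow_pos_of_pos htpos _).le
  have hn_ge := hn_ge'
  clear_value n s t
  refine ⟨fun r => by rw [hiter r, hn_def], ?_⟩
  intro S hbase hrec
  -- existence of a level reaching the base case
  have hex : ∃ r, n r ≤ t^2 := by
    refine ⟨N, ?_⟩
    have hp : (0:ℝ) < 2^N := by positivity
    have h2N : t ≤ 2^N := by
      calc t ≤ N := ht_le_N
      _ ≤ ((2^N : ℕ):ℝ) := by exact_mod_cast (Nat.lt_two_pow_self (n := N)).le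
      _ = (2:ℝ)^N := by push_cast; ring
    have hlogle : Real.logb 2 (n N) ≤ Real.logb 2 (t^2) := by
      rw [hlog, Real.logb_pow, ← hs_def]
      have h1 : (1/2^N) * t ≤ 1 := by
        rw [div_mul_eq_mul_div, one_mul, div_le_one hp]; linarith
      have h2 : (1 - 1/2^N) * s ≤ s := by
        have e : (1 - 1/2^N) * s = s - s/2^N := by field_simp <;> ring
        have : (0:ℝ) ≤ s/2^N := by positivity
        rw [e]; linarith
      push_cast
      linarith
    exact (Real.logb_le_logb (by norm_num) (hn_pos N) (by positivity)).mp hlogle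
  obtain ⟨k, hk_le, hk_min⟩ : ∃ k, n k ≤ t^2 ∧ ∀ j, j < k → t^2 < n j :=
    ⟨Nat.find hex, Nat.find_spec hex, fun j hj => lt_of_not_ge (Nat.find_min hex hj)⟩
  -- bound on 2^k
  have h2k : (2:ℝ)^k * s ≤ 2*t := by
    rcases Nat.eq_zero_or_pos k with h0 | hposk
    · simp only [h0, pow_zero, one_mul]; linarith
    · have hk1 : k - 1 < k := Nat.sub_lt hposk one_pos
      have hgt : t^2 < n (k-1) := hk_min _ hk1
      have hp : (0:ℝ) < 2^(k-1) := by positivity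
      have hloggt : 2*s < (1/2^(k-1)) * t + (1 - 1/2^(k-1)) * s := by
        rw [← hlog]
        calc 2*s = Real.logb 2 (t^2) := by
              rw [Real.logb_pow, ← hs_def]; push_cast; ring
        _ < _ := Real.logb_lt_logb (by norm_num) (by positivity) hgt
      have e : (1/2^(k-1)) * t + (1 - 1/2^(k-1)) * s = (t + (2^(k-1)-1)*s)/2^(k-1) := by
        field_simp <;> ring
      rw [e, lt_div_iff₀ hp] at hloggt
      have h2 : (2:ℝ)^k = 2 * 2^(k-1) := by
        rw [← pow_succ']; congr 1; omega
      rw [h2]; nlinarith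
  -- sqrt facts
  have hsq2 : Real.sqrt 2 * Real.sqrt 2 = 2 := Real.mul_self_sqrt (by norm_num)
  have hsq2pos : (0:ℝ) < Real.sqrt 2 := Real.sqrt_pos.mpr (by norm_num)
  have hss : Real.sqrt s * Real.sqrt s = s := Real.mul_self_sqrt hspos.le
  have h1s : 1 ≤ Real.sqrt s := by nlinarith [Real.sqrt_nonneg s]
  have htt : Real.sqrt t * Real.sqrt t = t := Real.mul_self_sqrt htpos.le
  have hsqrt2pow : ∀ j:ℕ, Real.sqrt ((2:ℝ)^j) = (Real.sqrt 2)^j := by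
    intro j; induction j with
    | zero => simp
    | succ j ih => rw [pow_succ, Real.sqrt_mul (by positivity), ih, pow_succ]
  have hsqrtlog : ∀ j, Real.sqrt (Real.logb 2 (n j)) ≤
      Real.sqrt t * ((Real.sqrt 2)⁻¹)^j + Real.sqrt s := by
    intro j
    rw [hlog]
    have hpj : (0:ℝ) < 2^j := by positivity
    have h1 : (1/2^j)*t + (1-1/2^j)*s ≤ t/2^j + s := by
      have hd : (0:ℝ) ≤ s/2^j := by positivity
      have e : (1 - 1/2^j) * s = s - s/2^j := by field_simp <;> ring
      have e3 : (1/2^j)*t = t/2^j := by ring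
      rw [e, e3]; linarith
    have ha : (0:ℝ) ≤ t/2^j := by positivity
    calc Real.sqrt ((1/2^j)*t + (1-1/2^j)*s) ≤ Real.sqrt (t/2^j + s) :=
          Real.sqrt_le_sqrt h1
    _ ≤ Real.sqrt (t/2^j) + Real.sqrt s := by
        have hsum : t/2^j + s ≤ (Real.sqrt (t/2^j) + Real.sqrt s)^2 := by
          have e1 := Real.sq_sqrt ha
          have e2 := Real.sq_sqrt hspos.le
          nlinarith [Real.sqrt_nonneg (t/2^j), Real.sqrt_nonneg s]
        calc Real.sqrt (t/2^j + s)
            ≤ Real.sqrt ((Real.sqrt (t/2^j) + Real.sqrt s)^2) := Real.sqrt_le_sqrt hsum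
          _ = _ := Real.sqrt_sq (by positivity)
    _ = Real.sqrt t * ((Real.sqrt 2)⁻¹)^j + Real.sqrt s := by
        rw [Real.sqrt_div htpos.le, hsqrt2pow j, div_eq_mul_inv, inv_pow]
  have htne : t ≠ 0 := ne_of_gt htpos
  have hprod : ∀ j, Real.sqrt (n j / t) * Real.sqrt (n j * t) = n j := by
    intro j
    rw [← Real.sqrt_mul (div_nonneg (hn_pos j).le htpos.le)]
    have e : n j / t * (n j * t) = (n j)^2 := by field_simp
    rw [e, Real.sqrt_sq (hn_pos j).le]
  -- The majorant
  obtain ⟨M, hM_def⟩ : ∃ M : ℕ → ℝ, ∀ j, M j = (2:ℝ)^(k-j) * (2*c'*s)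
      + c*Real.sqrt s*(2*(2:ℝ)^(k-j) - 1)
      + (Real.sqrt 2+1)*c*Real.sqrt t*(((Real.sqrt 2)^(k-j) - 1) * ((Real.sqrt 2)⁻¹)^j) :=
    ⟨_, fun _ => rfl⟩
  have key : ∀ d, d ≤ k → S (n (k-d)) ≤ n (k-d) * M (k-d) := by
    intro d
    induction d with
    | zero =>
      intro _
      simp only [Nat.sub_zero]
      have hM : M k = 2*c'*s + c*Real.sqrt s := by
        rw [hM_def]; simp only [Nat.sub_self, pow_zero]; ring
      have hb1 : (1:ℝ) ≤ n k := le_trans (by linarith) (hn_ge k)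
      have hb2 := hbase (n k) hb1 hk_le
      have hlogk : Real.logb 2 (n k) ≤ 2*s := by
        calc Real.logb 2 (n k) ≤ Real.logb 2 (t^2) :=
              Real.logb_le_logb_of_le (by norm_num) (hn_pos k) hk_le
        _ = 2*s := by rw [Real.logb_pow, ← hs_def]; push_cast; ring
      have hnk := hn_pos k
      calc S (n k) ≤ c' * n k * Real.logb 2 (n k) := hb2
        _ ≤ n k * (2*c'*s + c*Real.sqrt s) := by
            linarith [mul_le_mul_of_nonneg_left hlogk (mul_nonneg hc'.le hnk.le),
              mul_nonneg (mul_nonneg hc.le hnk.le) (Real.sqrt_nonneg s)]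
        _ = n k * M k := by rw [hM]
    | succ d ih =>
      intro hdk
      have hd : d ≤ k := by omega
      set j := k - (d+1) with hj_def
      have hjk : j < k := by omega
      have hj1 : j + 1 = k - d := by omega
      have hrec' := hrec (n j) (hk_min j hjk)
      rw [hstep j] at hrec'
      have ihs := ih hd
      rw [← hj1] at ihs
      have hmul : 2 * Real.sqrt (n j / t) * S (n (j+1)) ≤ 2 * (n j) * M (j+1) := by
        have hnn : (0:ℝ) ≤ 2 * Real.sqrt (n j / t) := by positivity
        calc 2 * Real.sqrt (n j / t) * S (n (j+1))
            ≤ 2 * Real.sqrt (n j / t) * (n (j+1) * M (j+1)) :=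
              mul_le_mul_of_nonneg_left ihs hnn
          _ = 2 * (Real.sqrt (n j / t) * Real.sqrt (n j * t)) * M (j+1) := by
              rw [hstep j]; ring
          _ = 2 * (n j) * M (j+1) := by rw [hprod j]
      have hterm : c * n j * Real.sqrt (Real.logb 2 (n j)) ≤
          c * n j * (Real.sqrt t * ((Real.sqrt 2)⁻¹)^j + Real.sqrt s) :=
        mul_le_mul_of_nonneg_left (hsqrtlog j)
          (mul_nonneg hc.le (hn_pos j).le)
      have hMeq : M j = 2 * M (j+1) + c*Real.sqrt s + c*Real.sqrt t*((Real.sqrt 2)⁻¹)^j := by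
        simp only [hM_def]
        have e1 : k - j = d + 1 := by omega
        have e2 : k - (j+1) = d := by omega
        rw [e1, e2]
        simp only [pow_succ]
        have hne : Real.sqrt 2 ≠ 0 := ne_of_gt hsq2pos
        linear_combination
          (c * Real.sqrt t * ((Real.sqrt 2)⁻¹)^j *
            ((1 - (Real.sqrt 2)^d) * (Real.sqrt 2 + 1) * Real.sqrt 2)) * (mul_inv_cancel₀ hne)
          + (c * Real.sqrt t * ((Real.sqrt 2)⁻¹)^j *
            (1 - (1 - (Real.sqrt 2)^d) * (Real.sqrt 2 + 1) * (Real.sqrt 2)⁻¹)) * hsq2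
      have := hn_pos j
      calc S (n j) = 2 * Real.sqrt (n j / t) * S (n (j+1))
            + c * n j * Real.sqrt (Real.logb 2 (n j)) := hrec'
        _ ≤ 2 * (n j) * M (j+1)
            + c * n j * (Real.sqrt t * ((Real.sqrt 2)⁻¹)^j + Real.sqrt s) := by
              linarith
        _ = n j * M j := by rw [hMeq]; ring
  have main := key k (le_refl k)
  rw [Nat.sub_self, hn0] at main
  have hM0 : M 0 ≤ (4*c' + 9*c) * t := by
    rw [hM_def]
    simp only [Nat.sub_zero, pow_zero, mul_one]
    have h2kle : (2:ℝ)^k ≤ 2*t := by nlinarith [pow_pos (zero_lt_two (α := ℝ)) k]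
    have hs1 : (2:ℝ)^k * Real.sqrt s ≤ 2*t := by
      nlinarith [pow_pos (zero_lt_two (α := ℝ)) k, h1s, hss]
    have hsqt : Real.sqrt t * (Real.sqrt 2)^k ≤ Real.sqrt 2 * t := by
      have ha : (0:ℝ) ≤ Real.sqrt t * (Real.sqrt 2)^k := by positivity
      have hb : (0:ℝ) ≤ Real.sqrt 2 * t := by positivity
      have e : ((Real.sqrt 2)^k) * ((Real.sqrt 2)^k) = 2^k := by rw [← mul_pow, hsq2]
      nlinarith [htt]
    have h2le : Real.sqrt 2 ≤ (3:ℝ)/2 := by nlinarith [Real.sqrt_nonneg 2]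
    have hstnn : (0:ℝ) ≤ Real.sqrt t := Real.sqrt_nonneg t
    have hssnn : (0:ℝ) ≤ Real.sqrt s := Real.sqrt_nonneg s
    have e4 : c*t*(Real.sqrt 2*Real.sqrt 2) = c*t*2 := by rw [hsq2]
    nlinarith [mul_le_mul_of_nonneg_left h2k hc'.le,
      mul_le_mul_of_nonneg_left hs1 hc.le,
      mul_le_mul_of_nonneg_left hsqt (mul_nonneg (by linarith : (0:ℝ) ≤ Real.sqrt 2 + 1) hc.le),
      mul_nonneg hc.le hssnn, mul_nonneg hc.le hstnn,
      mul_nonneg (mul_nonneg hsq2pos.le hc.le) hstnn,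
      mul_le_mul_of_nonneg_left h2le (mul_nonneg hc.le htpos.le),
      mul_nonneg hc.le htpos.le, e4]
  calc S N ≤ N * M 0 := main
    _ ≤ N * ((4*c' + 9*c) * t) := by
        exact mul_le_mul_of_nonneg_left hM0 hNpos.le
    _ = (4*c' + 9*c) * N * t := by ring
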